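/- Let X be a compact metrizable space and Y a Tychonoff space. If there exists a uniformly continuous surjection φ : C_p(X) → C_p(Y), then Y is compact and metrizable. -/

import Mathlib

/-- `C_p(X)`: continuous real-valued functions on `X` with the uniformity of
pointwise convergence. -/
def Cp (X : Type*) [TopologicalSpace X] : Type _ := {f : X → ℝ // Continuous f}

instance (X : Type*) [TopologicalSpace X] : UniformSpace (Cp X) :=
  inferInstanceAs (UniformSpace {f : X → ℝ // Continuous f})

open Set Filter Topology TopologicalSpace

section Aux

variable {Z : Type*} [TopologicalSpace Z]

lemma Cp.uc_eval (z : Z) : UniformContinuous (fun f : Cp Z => f.1 z) :=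
  (Pi.uniformContinuous_proj _ z).comp uniformContinuous_subtype_val

/-- Summability of a locally finite series of functions. -/
lemma locFin_summable {g : ℕ → Z → ℝ} {w : ℕ → Set Z}
    (hvan : ∀ m z, z ∈ w m → ∀ n, m ≤ n → g n z = 0)
    (hcov : ∀ z, ∃ m, z ∈ w m) (z : Z) : Summable fun n => g n z := by
  obtain ⟨m, hm⟩ := hcov z
  exact summable_of_ne_finset_zero (s := Finset.range m)
    (fun n hn => hvan m z hm n (Nat.le_of_not_lt (by simpa using hn)))

/-- Continuity of a locally finite sum of continuous functions. -/
lemma locFin_continuous {g : ℕ → Z → ℝ} {w : ℕ → Set Z}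
    (hg : ∀ n, Continuous (g n)) (hw : ∀ n, IsOpen (w n))
    (hcov : ∀ z, ∃ m, z ∈ w m)
    (hvan : ∀ m z, z ∈ w m → ∀ n, m ≤ n → g n z = 0) :
    Continuous fun z => ∑' n, g n z := by
  rw [continuous_iff_continuousAt]
  intro z
  obtain ⟨m, hm⟩ := hcov z
  have hfin : Continuous fun z' => ∑ n ∈ Finset.range m, g n z' :=
    continuous_finset_sum _ fun n _ => hg n
  apply ContinuousAt.congr hfin.continuousAt
  filter_upwards [(hw m).mem_nhds hm] with z' hz'
  exact (tsum_eq_sum (fun n hn => hvan m z' hz' n (Nat.le_of_not_lt (by simpa using hn)))).symm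

/-- If `C_p(Z)` is a countable union of totally bounded sets, then every
continuous real function on `Z` is bounded (i.e. `Z` is pseudocompact). -/
lemma bounded_of_sigmaTB {A : ℕ → Set (Cp Z)} (hA : ∀ n, TotallyBounded (A n))
    (hcov : ∀ f, ∃ n, f ∈ A n) (g : Cp Z) : ∃ M, ∀ z, |g.1 z| ≤ M := by
  by_contra hcon
  push_neg at hcon
  set G : Z → ℝ := fun z => |g.1 z| with hGdef
  have hGc : Continuous G := g.2.abs
  have step : ∀ C : ℝ, ∃ z, C < G z := by
    intro C
    obtain ⟨z, hz⟩ := hcon C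
    exact ⟨z, hz⟩
  -- a sequence of points where G grows with gaps at least 1
  let y : ℕ → Z := fun n =>
    Nat.rec (Classical.choose (step 0)) (fun _ prev => Classical.choose (step (G prev + 1))) n
  have hy : ∀ n, G (y n) + 1 < G (y (n + 1)) := fun n =>
    Classical.choose_spec (step (G (y n) + 1))
  set T : ℕ → ℝ := fun n => G (y n) with hTdef
  have hmono : ∀ k n, k ≤ n → T k ≤ T n := by
    intro k n h
    induction n, h using Nat.le_induction with
    | base => exact le_rfl
    | succ n hkn ih => exact ih.trans (by have := hy n; simp only [hTdef]; linarith)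
  have hgap : ∀ k n, k < n → T k + 1 ≤ T n := by
    intro k n h
    have h1 : T k + 1 ≤ T (k + 1) := (hy k).le
    exact h1.trans (hmono (k + 1) n h)
  have hlin : ∀ n : ℕ, T 0 + n ≤ T n := by
    intro n
    induction n with
    | zero => simp
    | succ n ih =>
      have := hy n
      push_cast
      simp only [hTdef] at ih ⊢
      linarith
  -- bounds for the pieces at the points y (n+1)
  have hMn : ∀ n, ∃ M, ∀ f ∈ A n, |f.1 (y (n + 1))| ≤ M := by
    intro n
    have h1 : TotallyBounded ((fun f : Cp Z => f.1 (y (n + 1))) '' A n) :=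
      (hA n).image (Cp.uc_eval _)
    obtain ⟨M, hM⟩ := isBounded_iff_forall_norm_le.mp h1.isBounded
    exact ⟨M, fun f hf => by
      simpa [Real.norm_eq_abs] using hM _ (Set.mem_image_of_mem _ hf)⟩
  choose Mb hMb using hMn
  set c : ℕ → ℝ := fun n => max (Mb n) 0 + 1 with hcdef
  have hcpos : ∀ n, 0 ≤ c n := fun n => by positivity
  set q : ℕ → ℝ → ℝ := fun n t => c n * max 0 (min (t - T n) 1) with hqdef
  set wR : ℕ → Set ℝ := fun m => Set.Iio (T m) with hwRdef
  have hcovR : ∀ t : ℝ, ∃ m, t ∈ wR m := by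
    intro t
    obtain ⟨m, hm⟩ := exists_nat_gt (t - T 0)
    refine ⟨m, ?_⟩
    have := hlin m
    simp only [hwRdef, Set.mem_Iio]
    linarith
  have hvanR : ∀ m t, t ∈ wR m → ∀ n, m ≤ n → q n t = 0 := by
    intro m t ht n hmn
    have h1 : t < T n := lt_of_lt_of_le ht (hmono m n hmn)
    have h2 : min (t - T n) 1 ≤ 0 := (min_le_left _ _).trans (by linarith)
    simp only [hqdef]
    rw [max_eq_left h2, mul_zero]
  have hqc : ∀ n, Continuous (q n) :=
    fun n => continuous_const.mul
      (continuous_const.max ((continuous_id.sub continuous_const).min continuous_const))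
  have hqnn : ∀ n t, 0 ≤ q n t := fun n t =>
    mul_nonneg (hcpos n) (le_max_left _ _)
  have hhc : Continuous fun t => ∑' n, q n t := locFin_continuous hqc (fun _ => isOpen_Iio) hcovR hvanR
  have hFc : Continuous fun z => ∑' n, q n (G z) := hhc.comp hGc
  obtain ⟨n, hn⟩ := hcov ⟨_, hFc⟩
  -- the contradiction at the point y (n+1)
  have hq1 : q n (T (n + 1)) = c n := by
    have h1 : (1 : ℝ) ≤ T (n + 1) - T n := by
      have := hgap n (n + 1) (Nat.lt_succ_self n); linarith
    simp only [hqdef]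
    rw [min_eq_right h1, max_eq_right (by norm_num : (0:ℝ) ≤ 1), mul_one]
  have hkey : c n ≤ ∑' k, q k (G (y (n + 1))) := by
    have h1 := Summable.le_tsum (locFin_summable hvanR hcovR (G (y (n + 1)))) n
      (fun j _ => hqnn j _)
    have h2 : G (y (n + 1)) = T (n + 1) := rfl
    rw [h2] at h1 ⊢
    rw [hq1] at h1
    exact h1
  have hbd := hMb n ⟨_, hFc⟩ hn
  have h3 : ∑' k, q k (G (y (n + 1))) ≤ |∑' k, q k (G (y (n + 1)))| := le_abs_self _
  have h4 : Mb n ≤ max (Mb n) 0 := le_max_left _ _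
  simp only at hbd
  simp only [hcdef] at hkey
  linarith

end Aux

theorem compact_metrizable_of_u_dominated
    {X Y : Type*} [TopologicalSpace X] [CompactSpace X]
    [TopologicalSpace.MetrizableSpace X]
    [TopologicalSpace Y] [CompletelyRegularSpace Y] [T1Space Y]
    (φ : Cp X → Cp Y) (hφ : UniformContinuous φ) (hsurj : Function.Surjective φ) :
    CompactSpace Y ∧ TopologicalSpace.MetrizableSpace Y := by
  classical
  -- the identity map from `C(X, ℝ)` (compact-open topology) to `C_p(X)`
  set ι : C(X, ℝ) → Cp X := fun v => ⟨v, v.continuous⟩ with hιdef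
  have hι : Continuous ι :=
    Continuous.subtype_mk (continuous_pi fun x => continuous_eval_const x) _
  set ψ : C(X, ℝ) → Cp Y := fun v => φ (ι v) with hψdef
  have hψ : Continuous ψ := hφ.continuous.comp hι
  have hψsurj : Function.Surjective ψ := by
    intro h
    obtain ⟨u, hu⟩ := hsurj h
    exact ⟨⟨u.1, u.2⟩, hu⟩
  -- pseudocompactness of Y
  have hpseudo : ∀ g : Cp Y, ∃ M, ∀ z, |g.1 z| ≤ M := by
    apply bounded_of_sigmaTB (A := fun n : ℕ => φ '' {u : Cp X | ∀ x, |u.1 x| ≤ (n : ℝ)})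
    · intro n
      apply TotallyBounded.image _ hφ
      refine (totallyBounded_image_iff (isUniformEmbedding_subtype_val (p := fun f : X → ℝ => Continuous f)).isUniformInducing).mp ?_
      apply TotallyBounded.subset _
        ((isCompact_univ_pi fun _ : X => isCompact_Icc (a := -(n : ℝ)) (b := (n : ℝ)))).totallyBounded
      rintro _ ⟨u, hu, rfl⟩
      exact Set.mem_univ_pi.mpr fun x => by simpa [Set.mem_Icc] using abs_le.mp (hu x)
    · intro f
      obtain ⟨u, rfl⟩ := hsurj f
      obtain ⟨C, hC⟩ := isCompact_univ.exists_bound_of_continuousOn u.2.continuousOn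
      refine ⟨⌈C⌉₊, Set.mem_image_of_mem _ fun x => ?_⟩
      calc |u.1 x| = ‖u.1 x‖ := (Real.norm_eq_abs _).symm
        _ ≤ C := hC x (Set.mem_univ x)
        _ ≤ (⌈C⌉₊ : ℝ) := Nat.le_ceil C
  -- the countable network on Y
  have hnet : ∀ (V : Set Y) (y : Y), IsOpen V → y ∈ V →
      ∃ s ∈ countableBasis C(X, ℝ), (∀ v ∈ s, 1/2 < (ψ v).1 y) ∧
        ∀ z : Y, (∀ v ∈ s, 1/2 < (ψ v).1 z) → z ∈ V := by
    intro V y hV hyV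
    obtain ⟨f, hfc, hf0, hf1⟩ :=
      CompletelyRegularSpace.completely_regular y Vᶜ hV.isClosed_compl (by simpa using hyV)
    set g : Y → ℝ := fun z => 1 - (f z : ℝ) with hg
    have hgc : Continuous g := continuous_const.sub (continuous_subtype_val.comp hfc)
    obtain ⟨u, hu⟩ := hψsurj ⟨g, hgc⟩
    have hWopen : IsOpen {h : Cp Y | 1/2 < h.1 y} :=
      isOpen_Ioi.preimage (Cp.uc_eval y).continuous
    have humem : u ∈ ψ ⁻¹' {h : Cp Y | 1/2 < h.1 y} := by
      simp only [Set.mem_preimage, hu, Set.mem_setOf_eq]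
      show (1:ℝ)/2 < g y
      simp only [hg, hf0]
      norm_num
    obtain ⟨s, hs, hus, hsub⟩ := (isBasis_countableBasis C(X, ℝ)).exists_subset_of_mem_open
      humem (hWopen.preimage hψ)
    refine ⟨s, hs, fun v hv => hsub hv, ?_⟩
    intro z hz
    by_contra hzV
    have h1 := hz u hus
    rw [hu] at h1
    have h2 : f z = 1 := hf1 (by simpa using hzV)
    have h3 : (f z : ℝ) = 1 := by rw [h2]; norm_num
    show False
    have : (1:ℝ)/2 < g z := h1
    rw [hg] at this
    simp only [h3] at this
    norm_num at this
  -- compactness of Y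
  have hcomp : CompactSpace Y := by
    rcases isEmpty_or_nonempty Y with hY | hY
    · exact ⟨by rw [Set.univ_eq_empty_iff.mpr hY]; exact isCompact_empty⟩
    constructor
    rw [isCompact_iff_finite_subcover]
    intro idx U hUo hUcov
    -- regular shrinking of the cover
    have step1 : ∀ y : Y, ∃ (V : Set Y) (i : idx), IsOpen V ∧ y ∈ V ∧ closure V ⊆ U i := by
      intro y
      obtain ⟨i, hi⟩ := Set.mem_iUnion.mp (hUcov (Set.mem_univ y))
      obtain ⟨f, hfc, hf0, hf1⟩ :=
        CompletelyRegularSpace.completely_regular y (U i)ᶜ (hUo i).isClosed_compl (by simpa using hi)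
      refine ⟨(fun z => (f z : ℝ)) ⁻¹' Set.Iio (1/2), i,
        isOpen_Iio.preimage (continuous_subtype_val.comp hfc), ?_, ?_⟩
      · show (f y : ℝ) < 1/2
        rw [hf0]; norm_num
      · have hcl : closure ((fun z => (f z : ℝ)) ⁻¹' Set.Iio (1/2)) ⊆
            (fun z => (f z : ℝ)) ⁻¹' Set.Iic (1/2) :=
          closure_minimal (fun z hz => show (f z : ℝ) ≤ 1/2 from le_of_lt hz)
            (isClosed_Iic.preimage (continuous_subtype_val.comp hfc))
        intro z hz
        by_contra hzU
        have h2 : f z = 1 := hf1 (by simpa using hzU)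
        have h3 := hcl hz
        have : (f z : ℝ) ≤ 1/2 := h3
        rw [h2] at this
        norm_num at this
    choose V iV hVo hVmem hVcl using step1
    -- countable subcover via the network
    choose s hsb hsmem hssub using fun y => hnet (V y) y (hVo y) (hVmem y)
    have hRc : (Set.range s).Countable :=
      (countable_countableBasis C(X, ℝ)).mono (Set.range_subset_iff.mpr hsb)
    obtain ⟨y0⟩ := hY
    obtain ⟨q, hq⟩ := hRc.exists_eq_range ⟨s y0, Set.mem_range_self y0⟩
    have hpick : ∀ n : ℕ, ∃ y, s y = q n := by
      intro n
      have : q n ∈ Set.range s := by rw [hq]; exact Set.mem_range_self n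
      exact this
    choose p hp using hpick
    have hcovp : ∀ z : Y, ∃ n, z ∈ V (p n) := by
      intro z
      have h1 : s z ∈ Set.range q := by rw [← hq]; exact Set.mem_range_self z
      obtain ⟨n, hn⟩ := h1
      refine ⟨n, hssub (p n) z ?_⟩
      intro v hv
      apply hsmem z v
      have : s (p n) = s z := by rw [hp n, hn]
      rwa [this] at hv
    by_cases hfin : ∃ n : ℕ, Set.univ ⊆ ⋃ m ∈ Finset.range (n + 1), closure (V (p m))
    · obtain ⟨n, hn⟩ := hfin
      refine ⟨(Finset.range (n + 1)).image (fun m => iV (p m)), ?_⟩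
      intro z hz
      obtain ⟨m, hm, hzm⟩ := Set.mem_iUnion₂.mp (hn hz)
      exact Set.mem_iUnion₂.mpr ⟨iV (p m), Finset.mem_image_of_mem _ hm, hVcl (p m) hzm⟩
    · push_neg at hfin
      have hpt : ∀ n : ℕ, ∃ z, z ∉ ⋃ m ∈ Finset.range (n + 1), closure (V (p m)) := by
        intro n
        rcases Set.not_subset.mp (hfin n) with ⟨z, _, hz⟩
        exact ⟨z, hz⟩
      choose pt hpt' using hpt
      set O : ℕ → Set Y := fun n => (⋃ m ∈ Finset.range (n + 1), closure (V (p m)))ᶜ with hO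
      have hOopen : ∀ n, IsOpen (O n) :=
        fun n => (isClosed_biUnion_finset fun m _ => isClosed_closure).isOpen_compl
      have hbump : ∀ n : ℕ, ∃ gn : Y → ℝ, Continuous gn ∧ (∀ z, 0 ≤ gn z) ∧
          gn (pt n) = (n : ℝ) + 1 ∧ ∀ z ∉ O n, gn z = 0 := by
        intro n
        obtain ⟨f, hfc, hf0, hf1⟩ := CompletelyRegularSpace.completely_regular (pt n) (O n)ᶜ
          (hOopen n).isClosed_compl (by simpa [hO] using hpt' n)
        refine ⟨fun z => ((n : ℝ) + 1) * (1 - (f z : ℝ)),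
          continuous_const.mul (continuous_const.sub (continuous_subtype_val.comp hfc)),
          ?_, ?_, ?_⟩
        · intro z
          have h1 : (f z : ℝ) ≤ 1 := (f z).2.2
          have h2 : (0:ℝ) ≤ (n : ℝ) + 1 := by positivity
          show (0:ℝ) ≤ ((n : ℝ) + 1) * (1 - (f z : ℝ))
          nlinarith
        · show ((n : ℝ) + 1) * (1 - (f (pt n) : ℝ)) = (n : ℝ) + 1
          rw [hf0]; norm_num
        · intro z hz
          have h2 : f z = 1 := hf1 (by simpa [hO] using hz)
          have h3 : (f z : ℝ) = 1 := by rw [h2]; norm_num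
          show ((n : ℝ) + 1) * (1 - (f z : ℝ)) = 0
          rw [h3]; ring
      choose gn hgc hgnn hgpt hgz using hbump
      have hvan : ∀ m z, z ∈ V (p m) → ∀ n, m ≤ n → gn n z = 0 := by
        intro m z hz n hmn
        apply hgz n z
        simp only [hO, Set.mem_compl_iff, not_not]
        exact Set.mem_biUnion (Finset.mem_range.mpr (Nat.lt_succ_of_le hmn)) (subset_closure hz)
      have hFc : Continuous fun z => ∑' n, gn n z :=
        locFin_continuous hgc (fun m => hVo (p m)) hcovp hvan
      obtain ⟨M, hM⟩ := hpseudo ⟨_, hFc⟩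
      obtain ⟨n, hn⟩ := exists_nat_gt M
      have h1 : (n : ℝ) + 1 ≤ ∑' k, gn k (pt n) := by
        have h2 := Summable.le_tsum (locFin_summable hvan hcovp (pt n)) n (fun j _ => hgnn j _)
        rwa [hgpt n] at h2
      have h2 := hM (pt n)
      simp only at h2
      have h3 := le_abs_self (∑' k, gn k (pt n))
      exfalso; linarith
  -- metrizability of Y
  have hmetr : TopologicalSpace.MetrizableSpace Y := by
    haveI := hcomp
    have hne : Nonempty C(X, ℝ) := ⟨0⟩
    obtain ⟨D, hDc, hDd⟩ := TopologicalSpace.exists_countable_dense C(X, ℝ)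
    obtain ⟨d, hd⟩ := hDc.exists_eq_range hDd.nonempty
    set e : Y → (ℕ → ℝ) := fun y n => (ψ (d n)).1 y with he_def
    have he : Continuous e := continuous_pi fun n => (ψ (d n)).2
    have hinj : Function.Injective e := by
      intro y y' hyy'
      by_contra hne'
      obtain ⟨f, hfc, hf0, hf1⟩ := CompletelyRegularSpace.completely_regular y {y'}
        isClosed_singleton (by simpa using hne')
      set g : Y → ℝ := fun z => (f z : ℝ) with hg
      have hgc : Continuous g := continuous_subtype_val.comp hfc
      have hWo : IsOpen {h : Cp Y | h.1 y < 1/3 ∧ 2/3 < h.1 y'} :=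
        IsOpen.and (isOpen_Iio.preimage (Cp.uc_eval y).continuous)
          (isOpen_Ioi.preimage (Cp.uc_eval y').continuous)
      have hgW : (⟨g, hgc⟩ : Cp Y) ∈ {h : Cp Y | h.1 y < 1/3 ∧ 2/3 < h.1 y'} := by
        constructor
        · show (f y : ℝ) < 1/3
          rw [hf0]; norm_num
        · show (2:ℝ)/3 < (f y' : ℝ)
          have : f y' = 1 := hf1 rfl
          rw [this]; norm_num
      have hdense : Dense (Set.range fun n => ψ (d n)) := by
        have h1 : ψ '' closure D ⊆ closure (ψ '' D) := image_closure_subset_closure_image hψ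
        rw [hDd.closure_eq] at h1
        rw [Set.image_univ] at h1
        have h2 : Set.range ψ = Set.univ := Set.range_eq_univ.mpr hψsurj
        rw [h2] at h1
        have h3 : ψ '' D = Set.range fun n => ψ (d n) := by
          rw [hd, ← Set.range_comp]
          rfl
        rw [h3] at h1
        rw [dense_iff_closure_eq]
        exact Set.eq_univ_of_univ_subset h1
      obtain ⟨x, hxr, hxW⟩ := hdense.exists_mem_open hWo ⟨_, hgW⟩
      obtain ⟨n, rfl⟩ := hxr
      have heq : (ψ (d n)).1 y = (ψ (d n)).1 y' := congrFun hyy' n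
      have hx1 := hxW.1
      have hx2 := hxW.2
      rw [heq] at hx1
      linarith
    exact ((he.isClosedEmbedding hinj).toIsEmbedding).metrizableSpace
  exact ⟨hcomp, hmetr⟩
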